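/- For D > 0, r_r > 0, λ > 0, N > 0, t > 0, the expected total number of molecules absorbed by time t, given by 4πλN ∫_{r_r}^∞ (r_r/r)·erfc((r−r_r)/√(4Dt))·r² dr, equals 4√π·λ·N·r_r·[ Dt√π + 2 r_r √(Dt) ]. In particular, it grows without bound as t → ∞. -/

import Mathlib

open Real MeasureTheory Filter

/-- The complementary error function `erfc x = (2/√π) ∫_x^∞ e^{−u²} du`. -/
noncomputable def erfc (x : ℝ) : ℝ :=
  (2 / Real.sqrt π) * ∫ u in Set.Ioi x, Real.exp (-u ^ 2)

lemma gauss_integrable : Integrable (fun u : ℝ => Real.exp (-u ^ 2)) := by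
  simpa using integrable_exp_neg_mul_sq (one_pos (α := ℝ))

lemma gauss_cont : Continuous (fun u : ℝ => Real.exp (-u ^ 2)) := by
  continuity

lemma erfc_nonneg (x : ℝ) : 0 ≤ erfc x := by
  apply mul_nonneg (by positivity)
  exact setIntegral_nonneg measurableSet_Ioi fun u _ => (Real.exp_pos _).le

lemma hasDerivAt_erfc (x : ℝ) :
    HasDerivAt erfc (-(2 / Real.sqrt π * Real.exp (-x ^ 2))) x := by
  have hkey : ∀ y : ℝ, erfc y =
      (2 / Real.sqrt π) * ((∫ u : ℝ, Real.exp (-u ^ 2)) -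
        (∫ u in Set.Iic (0:ℝ), Real.exp (-u ^ 2)) - ∫ u in (0:ℝ)..y, Real.exp (-u ^ 2)) := by
    intro y
    rw [erfc]
    congr 1
    have h1 := intervalIntegral.integral_Iic_add_Ioi (b := y)
      gauss_integrable.integrableOn gauss_integrable.integrableOn
    have h2 := intervalIntegral.integral_Iic_sub_Iic (a := (0:ℝ)) (b := y)
      gauss_integrable.integrableOn gauss_integrable.integrableOn
    linarith
  have hD : HasDerivAt (fun y => (2 / Real.sqrt π) * ((∫ u : ℝ, Real.exp (-u ^ 2)) -
        (∫ u in Set.Iic (0:ℝ), Real.exp (-u ^ 2)) - ∫ u in (0:ℝ)..y, Real.exp (-u ^ 2)))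
      (-(2 / Real.sqrt π * Real.exp (-x ^ 2))) x := by
    have hF : HasDerivAt (fun y => ∫ u in (0:ℝ)..y, Real.exp (-u ^ 2))
        (Real.exp (-x ^ 2)) x :=
      intervalIntegral.integral_hasDerivAt_right
        (gauss_integrable.intervalIntegrable)
        (gauss_cont.stronglyMeasurableAtFilter _ _)
        gauss_cont.continuousAt
    have := (hF.const_sub ((∫ u : ℝ, Real.exp (-u ^ 2)) -
        (∫ u in Set.Iic (0:ℝ), Real.exp (-u ^ 2)))).const_mul (2 / Real.sqrt π)
    exact this.congr_deriv (by ring)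
  rw [show erfc = _ from funext hkey]
  exact hD

lemma gauss_mul_integrable : Integrable (fun u : ℝ => u * Real.exp (-u ^ 2)) := by
  simpa using integrable_mul_exp_neg_mul_sq (one_pos (α := ℝ))

lemma tendsto_gauss : Tendsto (fun u : ℝ => Real.exp (-u ^ 2)) atTop (nhds 0) := by
  apply Real.tendsto_exp_atBot.comp
  exact Filter.tendsto_neg_atBot_iff.mpr (tendsto_pow_atTop two_ne_zero)

lemma integral_Ioi_mul_gauss (x : ℝ) :
    ∫ u in Set.Ioi x, u * Real.exp (-u ^ 2) = Real.exp (-x ^ 2) / 2 := by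
  have hderiv : ∀ u ∈ Set.Ici x,
      HasDerivAt (fun v : ℝ => -(Real.exp (-v ^ 2)) / 2) (u * Real.exp (-u ^ 2)) u := by
    intro u _
    have h := (((hasDerivAt_id u).pow 2).neg.exp.neg.div_const 2)
    refine h.congr_deriv ?_
    simp only [id_eq, Pi.neg_apply, Pi.pow_apply]
    ring
  have hint : IntegrableOn (fun u : ℝ => u * Real.exp (-u ^ 2)) (Set.Ioi x) := by
    exact gauss_mul_integrable.integrableOn
  have htend : Tendsto (fun v : ℝ => -(Real.exp (-v ^ 2)) / 2) atTop (nhds 0) := by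
    have := (tendsto_gauss.neg).div_const 2
    simpa using this
  rw [MeasureTheory.integral_Ioi_of_hasDerivAt_of_tendsto' hderiv hint htend]
  ring

lemma erfc_le {x : ℝ} (hx : 0 < x) :
    erfc x ≤ Real.exp (-x ^ 2) / (x * Real.sqrt π) := by
  have hπ : (0:ℝ) < Real.sqrt π := Real.sqrt_pos.mpr pi_pos
  have hmono : (∫ u in Set.Ioi x, Real.exp (-u ^ 2)) ≤
      ∫ u in Set.Ioi x, (1 / x) * (u * Real.exp (-u ^ 2)) := by
    apply setIntegral_mono_on gauss_integrable.integrableOn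
      ((gauss_mul_integrable.const_mul (1 / x)).integrableOn) measurableSet_Ioi
    intro u hu
    have hux : x < u := hu
    have h1 : (1:ℝ) ≤ u / x := (one_le_div hx).mpr hux.le
    calc Real.exp (-u ^ 2) = 1 * Real.exp (-u ^ 2) := by ring
      _ ≤ (u / x) * Real.exp (-u ^ 2) :=
          mul_le_mul_of_nonneg_right h1 (Real.exp_pos _).le
      _ = (1 / x) * (u * Real.exp (-u ^ 2)) := by ring
  rw [erfc]
  rw [MeasureTheory.integral_const_mul, integral_Ioi_mul_gauss] at hmono
  calc (2 / Real.sqrt π) * ∫ u in Set.Ioi x, Real.exp (-u ^ 2)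
      ≤ (2 / Real.sqrt π) * ((1 / x) * (Real.exp (-x ^ 2) / 2)) :=
        mul_le_mul_of_nonneg_left hmono (by positivity)
    _ = Real.exp (-x ^ 2) / (x * Real.sqrt π) := by field_simp

lemma tendsto_pow_mul_gauss (n : ℕ) :
    Tendsto (fun x : ℝ => x ^ n * Real.exp (-x ^ 2)) atTop (nhds 0) := by
  apply tendsto_of_tendsto_of_tendsto_of_le_of_le'
    tendsto_const_nhds (Real.tendsto_pow_mul_exp_neg_atTop_nhds_zero n)
  · filter_upwards [eventually_ge_atTop (0:ℝ)] with x hx using by positivity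
  · filter_upwards [eventually_ge_atTop (1:ℝ)] with x hx
    have h : Real.exp (-x ^ 2) ≤ Real.exp (-x) := Real.exp_le_exp.mpr (by nlinarith)
    exact mul_le_mul_of_nonneg_left h (by positivity)

lemma tendsto_pow_mul_erfc (n : ℕ) :
    Tendsto (fun x : ℝ => x ^ n * erfc x) atTop (nhds 0) := by
  have hπ1 : (1:ℝ) ≤ Real.sqrt π := by
    rw [show (1:ℝ) = Real.sqrt 1 from (Real.sqrt_one).symm]
    exact Real.sqrt_le_sqrt (by linarith [Real.pi_gt_three])
  apply tendsto_of_tendsto_of_tendsto_of_le_of_le'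
    tendsto_const_nhds (tendsto_pow_mul_gauss n)
  · filter_upwards [eventually_ge_atTop (0:ℝ)] with x hx
    exact mul_nonneg (by positivity) (erfc_nonneg x)
  · filter_upwards [eventually_ge_atTop (1:ℝ)] with x hx
    have hx0 : (0:ℝ) < x := by linarith
    have h1 : erfc x ≤ Real.exp (-x ^ 2) / (x * Real.sqrt π) := erfc_le hx0
    have h2 : Real.exp (-x ^ 2) / (x * Real.sqrt π) ≤ Real.exp (-x ^ 2) := by
      rw [div_le_iff₀ (by positivity)]
      nlinarith [(Real.exp_pos (-x ^ 2)).le,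
        mul_le_mul hx hπ1 zero_le_one hx0.le]
    calc x ^ n * erfc x ≤ x ^ n * Real.exp (-x ^ 2) :=
      mul_le_mul_of_nonneg_left (h1.trans h2) (by positivity)
    _ ≤ x ^ n * Real.exp (-x ^ 2) := le_rfl

lemma tendsto_erfc : Tendsto erfc atTop (nhds 0) := by
  simpa using tendsto_pow_mul_erfc 0

lemma erfc_zero : erfc 0 = 1 := by
  have h : ∫ u in Set.Ioi (0:ℝ), Real.exp (-u ^ 2) = Real.sqrt π / 2 := by
    simpa using integral_gaussian_Ioi 1
  have hπ : Real.sqrt π ≠ 0 := (Real.sqrt_pos.mpr pi_pos).ne'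
  rw [erfc, h]
  field_simp

lemma key_integral {rr s : ℝ} (hrr : 0 < rr) (hs : 0 < s) :
    ∫ r in Set.Ioi rr, rr * r * erfc ((r - rr) / s)
      = rr * (s ^ 2 / 4) + rr ^ 2 * s / Real.sqrt π := by
  have hπ : (0:ℝ) < Real.sqrt π := Real.sqrt_pos.mpr pi_pos
  set F : ℝ → ℝ := fun r => rr *
      (((r - rr) ^ 2 / 2 - s ^ 2 / 4 + rr * (r - rr)) * erfc ((r - rr) / s) -
        (s * (r - rr) / (2 * Real.sqrt π) + rr * s / Real.sqrt π) *
          Real.exp (-((r - rr) / s) ^ 2) + s ^ 2 / 4) with hF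
  have hderiv : ∀ r ∈ Set.Ici rr, HasDerivAt F (rr * r * erfc ((r - rr) / s)) r := by
    intro r _
    have h0 : HasDerivAt (fun x : ℝ => (x - rr) / s) (1 / s) r := by
      simpa using ((hasDerivAt_id r).sub_const rr).div_const s
    have hE : HasDerivAt (fun x : ℝ => erfc ((x - rr) / s))
        (-(2 / Real.sqrt π * Real.exp (-((r - rr) / s) ^ 2)) * (1 / s)) r := by
      have := HasDerivAt.comp (x := r) (hasDerivAt_erfc ((r - rr) / s)) h0
      exact this
    have hP : HasDerivAt (fun x : ℝ => Real.exp (-((x - rr) / s) ^ 2))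
        (Real.exp (-((r - rr) / s) ^ 2) * (-((2:ℕ) * ((r - rr) / s) ^ 1 * (1 / s)))) r :=
      ((h0.pow 2).neg).exp
    have hA : HasDerivAt (fun x : ℝ => (x - rr) ^ 2 / 2 - s ^ 2 / 4 + rr * (x - rr))
        (((2:ℕ) * (r - rr) ^ 1 * 1) / 2 + rr * 1) r := by
      have h1 : HasDerivAt (fun x : ℝ => x - rr) 1 r := by
        simpa using (hasDerivAt_id r).sub_const rr
      exact (((h1.pow 2).div_const 2).sub_const (s ^ 2 / 4)).add (h1.const_mul rr)
    have hB : HasDerivAt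
        (fun x : ℝ => s * (x - rr) / (2 * Real.sqrt π) + rr * s / Real.sqrt π)
        ((s * 1) / (2 * Real.sqrt π)) r := by
      have h1 : HasDerivAt (fun x : ℝ => x - rr) 1 r := by
        simpa using (hasDerivAt_id r).sub_const rr
      exact (((h1.const_mul s).div_const (2 * Real.sqrt π)).add_const (rr * s / Real.sqrt π))
    have H := ((((hA.mul hE).sub (hB.mul hP)).add_const (s ^ 2 / 4)).const_mul rr)
    refine H.congr_deriv ?_
    push_cast
    field_simp
    ring
  have hpos : ∀ r ∈ Set.Ioi rr, 0 ≤ rr * r * erfc ((r - rr) / s) := by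
    intro r hr
    exact mul_nonneg (mul_nonneg hrr.le (hrr.trans hr).le) (erfc_nonneg _)
  have htend : Tendsto F atTop (nhds (rr * (s ^ 2 / 4))) := by
    set φ : ℝ → ℝ := fun y => rr *
        (s ^ 2 / 2 * (y ^ 2 * erfc y) + -(s ^ 2 / 4) * erfc y +
          rr * s * (y ^ 1 * erfc y) + -(s ^ 2 / (2 * Real.sqrt π)) * (y ^ 1 * Real.exp (-y ^ 2)) +
          -(rr * s / Real.sqrt π) * Real.exp (-y ^ 2) + s ^ 2 / 4) with hφ
    have hT : Tendsto φ atTop (nhds (rr *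
        (s ^ 2 / 2 * 0 + -(s ^ 2 / 4) * 0 + rr * s * 0 +
          -(s ^ 2 / (2 * Real.sqrt π)) * 0 + -(rr * s / Real.sqrt π) * 0 + s ^ 2 / 4))) := by
      exact ((((((tendsto_pow_mul_erfc 2).const_mul (s ^ 2 / 2)).add
        (tendsto_erfc.const_mul (-(s ^ 2 / 4)))).add
        ((tendsto_pow_mul_erfc 1).const_mul (rr * s))).add
        ((tendsto_pow_mul_gauss 1).const_mul (-(s ^ 2 / (2 * Real.sqrt π))))).add
        (tendsto_gauss.const_mul (-(rr * s / Real.sqrt π)))).add_const (s ^ 2 / 4) |>.const_mul rr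
    have hval : rr * (s ^ 2 / 2 * 0 + -(s ^ 2 / 4) * 0 + rr * s * 0 +
          -(s ^ 2 / (2 * Real.sqrt π)) * 0 + -(rr * s / Real.sqrt π) * 0 + s ^ 2 / 4)
        = rr * (s ^ 2 / 4) := by ring
    rw [hval] at hT
    have hcompat : ∀ r : ℝ, F r = φ ((r - rr) / s) := by
      intro r
      rw [hF, hφ]
      field_simp
      ring
    have hψ : Tendsto (fun r : ℝ => (r - rr) / s) atTop atTop := by
      simp only [sub_eq_add_neg]
      exact Tendsto.atTop_div_const hs (tendsto_atTop_add_const_right _ (-rr) tendsto_id)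
    exact (hT.comp hψ).congr fun r => (hcompat r).symm
  have hint := MeasureTheory.integral_Ioi_of_hasDerivAt_of_nonneg' hderiv hpos htend
  rw [hint, hF]
  norm_num [erfc_zero]
  field_simp
  ring


/-- Expected total number of molecules absorbed by time `t` by a fully absorbing
sphere from a Poisson field of transmitters, in closed form; it grows without
bound as `t → ∞`. -/
theorem expected_total_absorption
    (D rr lam N : ℝ) (hD : 0 < D) (hrr : 0 < rr) (hlam : 0 < lam) (hN : 0 < N) :
    (∀ t : ℝ, 0 < t →
      4 * π * lam * N *
        (∫ r in Set.Ioi rr, (rr / r) * erfc ((r - rr) / Real.sqrt (4 * D * t)) * r ^ 2) =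
        4 * Real.sqrt π * lam * N * rr *
          (D * t * Real.sqrt π + 2 * rr * Real.sqrt (D * t))) ∧
    Tendsto (fun t : ℝ =>
        4 * π * lam * N *
          ∫ r in Set.Ioi rr, (rr / r) * erfc ((r - rr) / Real.sqrt (4 * D * t)) * r ^ 2)
      atTop atTop := by
  have hπ : (0:ℝ) < Real.sqrt π := Real.sqrt_pos.mpr pi_pos
  have hππ : Real.sqrt π * Real.sqrt π = π := Real.mul_self_sqrt pi_pos.le
  have key : ∀ t : ℝ, 0 < t →
      4 * π * lam * N *
        (∫ r in Set.Ioi rr, (rr / r) * erfc ((r - rr) / Real.sqrt (4 * D * t)) * r ^ 2) =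
        4 * Real.sqrt π * lam * N * rr *
          (D * t * Real.sqrt π + 2 * rr * Real.sqrt (D * t)) := by
    intro t ht
    set s : ℝ := Real.sqrt (4 * D * t) with hsdef
    have hs : 0 < s := Real.sqrt_pos.mpr (by positivity)
    have hcong : (∫ r in Set.Ioi rr, (rr / r) * erfc ((r - rr) / s) * r ^ 2)
        = ∫ r in Set.Ioi rr, rr * r * erfc ((r - rr) / s) := by
      apply setIntegral_congr_fun measurableSet_Ioi
      intro r hr
      have h0 : r ≠ 0 := (hrr.trans hr).ne'
      field_simp
    rw [hcong, key_integral hrr hs]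
    have hs2 : s ^ 2 = 4 * D * t := Real.sq_sqrt (by positivity)
    have hsq : s = 2 * Real.sqrt (D * t) := by
      rw [hsdef, show (4:ℝ) * D * t = 2 ^ 2 * (D * t) by ring,
        Real.sqrt_mul (by norm_num), Real.sqrt_sq (by norm_num)]
    rw [hsq] at hs2 ⊢
    set a : ℝ := Real.sqrt (D * t) with hadef
    have ha2 : a ^ 2 = D * t := Real.sq_sqrt (by positivity)
    rw [← ha2]
    field_simp
    linear_combination (-(4 * a * (a * Real.sqrt π + 2 * rr))) * hππ
  refine ⟨key, ?_⟩
  have hR : Tendsto (fun t : ℝ => 4 * Real.sqrt π * lam * N * rr *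
      (D * t * Real.sqrt π + 2 * rr * Real.sqrt (D * t))) atTop atTop := by
    apply tendsto_atTop_mono' atTop (f₁ := fun t : ℝ =>
      (4 * Real.sqrt π * lam * N * rr * (D * Real.sqrt π)) * t)
    · filter_upwards [eventually_ge_atTop (0:ℝ)] with t ht
      have h2 : 0 ≤ 4 * Real.sqrt π * lam * N * rr * (2 * rr * Real.sqrt (D * t)) := by
        positivity
      nlinarith [h2]
    · exact Tendsto.const_mul_atTop (by positivity) tendsto_id
  apply hR.congr'
  filter_upwards [eventually_gt_atTop (0:ℝ)] with t ht
  exact (key t ht).symm
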